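/- Let Γ be a Borel probability measure on ℝ^d and let W_Γ be the linear span of its topological support. Then there exists a constant c > 0 such that for every Λ ∈ W_Γ one has ∫ |⟨X, Λ⟩| dΓ(X) ≥ c·‖Λ‖. -/

import Mathlib

open MeasureTheory ProbabilityTheory Filter Set
open scoped ENNReal RealInnerProductSpace Topology

noncomputable section

/-- `ℝ^d` with the Euclidean norm. -/
abbrev Ed (d : ℕ) : Type := EuclideanSpace ℝ (Fin d)

/-- Action of the CAR transition kernel `P_g` on a function `h`:
`(P_g h)(Λ) = ∫ [ g(Λ,X)·h(Λ + (1−ρ)X) + (1−g(Λ,X))·h(Λ − ρX) ] dΓ(X)`. -/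
def kernelOp (d : ℕ) (ρ : ℝ) (Γ : Measure (Ed d)) (g : Ed d → Ed d → ℝ)
    (h : Ed d → ℝ) (Λ : Ed d) : ℝ :=
  ∫ X, g Λ X * h (Λ + (1 - ρ) • X) + (1 - g Λ X) * h (Λ - ρ • X) ∂Γ

/-- `W_Γ`: the linear span of the topological support of `Γ` (the set of points all of
whose open neighbourhoods have positive measure). -/
def suppSpan (d : ℕ) (Γ : Measure (Ed d)) : Submodule ℝ (Ed d) :=
  Submodule.span ℝ {x : Ed d | ∀ U : Set (Ed d), IsOpen U → x ∈ U → 0 < Γ U}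

/-- The `(M,Δ)`-negative feedback condition for an allocation function `g`. -/
def NegFeedback (d : ℕ) (ρ M Δ : ℝ) (Γ : Measure (Ed d)) (g : Ed d → Ed d → ℝ) : Prop :=
  ∀ Λ : Ed d, Λ ∈ suppSpan d Γ → M ≤ ‖Λ‖ →
    (∫ X, (g Λ X - ρ) * (⟪X, Λ⟫ / ‖Λ‖) ∂Γ) ≤ -Δ

/-- `Γ` is sub-exponential: `∫ exp(λ‖X‖) dΓ(X) < ∞` for some `λ > 0`. -/
def SubExp (d : ℕ) (Γ : Measure (Ed d)) : Prop :=
  ∃ l : ℝ, 0 < l ∧ Integrable (fun x => Real.exp (l * ‖x‖)) Γ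

/-- On the linear span of the support of `Γ`, the first absolute moment of `⟨X, Λ⟩` is
bounded below by a constant multiple of `‖Λ‖`. -/
lemma meas_f (d : ℕ) (Λ : Ed d) : Measurable fun X : Ed d => ENNReal.ofReal |⟪X, Λ⟫| :=
  ENNReal.measurable_ofReal.comp ((continuous_id.inner continuous_const).abs.measurable)

lemma pos_of_mem (d : ℕ) (Γ : Measure (Ed d)) {Λ : Ed d}
    (hΛ : Λ ∈ suppSpan d Γ) (h0 : Λ ≠ 0) :
    0 < ∫⁻ X, ENNReal.ofReal |⟪X, Λ⟫| ∂Γ := by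
  by_contra h
  push_neg at h
  have hz : ∫⁻ X, ENNReal.ofReal |⟪X, Λ⟫| ∂Γ = 0 := le_antisymm h zero_le
  rw [lintegral_eq_zero_iff (meas_f d Λ)] at hz
  have h2 : ∀ᵐ x ∂Γ, ⟪x, Λ⟫ = 0 := by
    refine hz.mono fun x hx => ?_
    have : ENNReal.ofReal |⟪x, Λ⟫| = 0 := hx
    rw [ENNReal.ofReal_eq_zero] at this
    exact abs_eq_zero.mp (le_antisymm this (abs_nonneg _))
  have hU : Γ {x : Ed d | ⟪x, Λ⟫ ≠ 0} = 0 := by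
    have := ae_iff.mp h2
    exact this
  have hS : {x : Ed d | ∀ U : Set (Ed d), IsOpen U → x ∈ U → 0 < Γ U}
      ⊆ (LinearMap.ker (innerSL ℝ Λ : Ed d →ₗ[ℝ] ℝ) : Set (Ed d)) := by
    intro x hx
    have hinner : ⟪x, Λ⟫ = 0 := by
      by_contra hc
      have hopen : IsOpen {y : Ed d | ⟪y, Λ⟫ ≠ 0} :=
        isOpen_ne.preimage (continuous_id.inner continuous_const)
      have := hx _ hopen hc
      rw [hU] at this
      exact lt_irrefl 0 this
    have : ((innerSL ℝ Λ) x : ℝ) = 0 := by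
      rw [innerSL_apply_apply, real_inner_comm]; exact hinner
    exact LinearMap.mem_ker.mpr this
  have hmem : Λ ∈ LinearMap.ker (innerSL ℝ Λ : Ed d →ₗ[ℝ] ℝ) := Submodule.span_le.mpr hS hΛ
  have h3 : ⟪Λ, Λ⟫ = 0 := by
    have := LinearMap.mem_ker.mp hmem
    rwa [ContinuousLinearMap.coe_coe, innerSL_apply_apply] at this
  exact h0 (inner_self_eq_zero.mp h3)

lemma sphere_bound (d : ℕ) (Γ : Measure (Ed d)) [IsProbabilityMeasure Γ] :
    ∃ ε > (0:ℝ), ∀ Λ ∈ Metric.sphere (0 : Ed d) 1 ∩ (suppSpan d Γ : Set (Ed d)),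
      ENNReal.ofReal ε ≤ ∫⁻ X, ENNReal.ofReal |⟪X, Λ⟫| ∂Γ := by
  by_contra hcon
  push_neg at hcon
  choose! Λ hΛK hΛlt using fun n : ℕ =>
    hcon (1/((n:ℝ)+1)) (by positivity)
  have hKcomp : IsCompact (Metric.sphere (0 : Ed d) 1 ∩ (suppSpan d Γ : Set (Ed d))) :=
    (isCompact_sphere (0:Ed d) 1).inter_right (Submodule.closed_of_finiteDimensional _)
  obtain ⟨Λ₀, hΛ₀K, φ, hφ, htend⟩ := hKcomp.tendsto_subseq hΛK
  have hpt : ∀ X : Ed d,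
      Tendsto (fun n => ENNReal.ofReal |⟪X, Λ (φ n)⟫|) atTop
        (𝓝 (ENNReal.ofReal |⟪X, Λ₀⟫|)) := by
    intro X
    have hc : Continuous fun y : Ed d => ENNReal.ofReal |⟪X, y⟫| :=
      ENNReal.continuous_ofReal.comp (continuous_const.inner continuous_id).abs
    exact (hc.tendsto Λ₀).comp htend
  have fatou : ∫⁻ X, ENNReal.ofReal |⟪X, Λ₀⟫| ∂Γ
      ≤ liminf (fun n => ∫⁻ X, ENNReal.ofReal |⟪X, Λ (φ n)⟫| ∂Γ) atTop := by
    have := lintegral_liminf_le (μ := Γ) (u := atTop)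
      (f := fun n X => ENNReal.ofReal |⟪X, Λ (φ n)⟫|) (fun n => meas_f d (Λ (φ n)))
    calc ∫⁻ X, ENNReal.ofReal |⟪X, Λ₀⟫| ∂Γ
        = ∫⁻ X, liminf (fun n => ENNReal.ofReal |⟪X, Λ (φ n)⟫|) atTop ∂Γ := by
          refine lintegral_congr fun X => ?_
          exact ((hpt X).liminf_eq).symm
      _ ≤ _ := this
  have hbound : liminf (fun n => ∫⁻ X, ENNReal.ofReal |⟪X, Λ (φ n)⟫| ∂Γ) atTop ≤ 0 := by
    have h1 : Tendsto (fun n => ENNReal.ofReal (1/((φ n : ℝ)+1))) atTop (𝓝 0) := by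
      have h2 : Tendsto (fun n : ℕ => 1/((n:ℝ)+1)) atTop (𝓝 0) :=
        tendsto_one_div_add_atTop_nhds_zero_nat
      have := (ENNReal.continuous_ofReal.tendsto 0).comp (h2.comp hφ.tendsto_atTop)
      simpa [Function.comp_def] using this
    calc liminf (fun n => ∫⁻ X, ENNReal.ofReal |⟪X, Λ (φ n)⟫| ∂Γ) atTop
        ≤ liminf (fun n => ENNReal.ofReal (1/((φ n : ℝ)+1))) atTop := by
          refine liminf_le_liminf (Eventually.of_forall fun n => ?_)
          exact (hΛlt (φ n)).le
      _ = 0 := h1.liminf_eq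
  have hzero : ∫⁻ X, ENNReal.ofReal |⟪X, Λ₀⟫| ∂Γ = 0 :=
    le_antisymm (fatou.trans hbound) zero_le
  have h0 : Λ₀ ≠ 0 := by
    have : ‖Λ₀‖ = 1 := mem_sphere_zero_iff_norm.mp hΛ₀K.1
    intro h; rw [h] at this; simp at this
  exact absurd hzero (pos_of_mem d Γ hΛ₀K.2 h0).ne'

theorem stmt11 (d : ℕ) (Γ : Measure (Ed d)) [IsProbabilityMeasure Γ] :
    ∃ c > (0 : ℝ), ∀ Λ ∈ suppSpan d Γ,
      ENNReal.ofReal (c * ‖Λ‖) ≤ ∫⁻ X, ENNReal.ofReal |⟪X, Λ⟫| ∂Γ := by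
  obtain ⟨ε, hε, hK⟩ := sphere_bound d Γ
  refine ⟨ε, hε, fun Λ hΛ => ?_⟩
  rcases eq_or_ne Λ 0 with rfl | h0
  · simp
  · set u := ‖Λ‖⁻¹ • Λ with hu
    have hnorm : ‖u‖ = 1 := norm_smul_inv_norm h0
    have huW : u ∈ suppSpan d Γ := Submodule.smul_mem _ _ hΛ
    have hKu := hK u ⟨mem_sphere_zero_iff_norm.mpr hnorm, huW⟩
    have hΛeq : ‖Λ‖ • u = Λ := by
      rw [hu, smul_smul, mul_inv_cancel₀ (norm_ne_zero_iff.mpr h0), one_smul]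
    have key : ∫⁻ X, ENNReal.ofReal |⟪X, Λ⟫| ∂Γ
        = ENNReal.ofReal ‖Λ‖ * ∫⁻ X, ENNReal.ofReal |⟪X, u⟫| ∂Γ := by
      rw [← lintegral_const_mul' _ _ ENNReal.ofReal_ne_top]
      refine lintegral_congr fun X => ?_
      have hin : ⟪X, Λ⟫ = ‖Λ‖ * ⟪X, u⟫ := by
        conv_lhs => rw [← hΛeq]
        exact real_inner_smul_right X u ‖Λ‖
      rw [hin, abs_mul, abs_of_nonneg (norm_nonneg Λ),
        ENNReal.ofReal_mul (norm_nonneg Λ)]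
    calc ENNReal.ofReal (ε * ‖Λ‖)
        = ENNReal.ofReal ‖Λ‖ * ENNReal.ofReal ε := by
          rw [← ENNReal.ofReal_mul (norm_nonneg Λ), mul_comm]
      _ ≤ ENNReal.ofReal ‖Λ‖ * ∫⁻ X, ENNReal.ofReal |⟪X, u⟫| ∂Γ :=
          by gcongr
      _ = _ := key.symm
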